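/- For δ > 0 and f(ρ) = 2ρ - ρ², the minimax value max over c > 0 of min(f(c·e^δ), f(c·e^{-δ})) equals sech²(δ), and is attained uniquely at c = sech(δ). -/
import Mathlib


theorem minimax_value
    (δ : ℝ) (hδ : 0 < δ)
    (f : ℝ → ℝ) (hf : ∀ ρ, f ρ = 2 * ρ - ρ ^ 2) :
    IsGreatest
      {v : ℝ | ∃ c : ℝ, 0 < c ∧ v = min (f (c * Real.exp δ)) (f (c * Real.exp (-δ)))}
      (1 / (Real.cosh δ) ^ 2) ∧
    (∀ c : ℝ, 0 < c →
      min (f (c * Real.exp δ)) (f (c * Real.exp (-δ))) = 1 / (Real.cosh δ) ^ 2 →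
      c = 1 / Real.cosh δ) := by
  have hcp : 0 < Real.cosh δ := Real.cosh_pos δ
  have hE : 0 < Real.exp δ := Real.exp_pos δ
  have hF : 0 < Real.exp (-δ) := Real.exp_pos _
  have hE1 : 1 < Real.exp δ := by nlinarith [Real.add_one_le_exp δ]
  have hFeq : Real.exp (-δ) = (Real.exp δ)⁻¹ := Real.exp_neg δ
  have hF1 : Real.exp (-δ) < 1 := by rw [hFeq]; exact inv_lt_one_of_one_lt₀ hE1
  have hA : Real.cosh δ = (Real.exp δ + Real.exp (-δ)) / 2 := Real.cosh_eq δ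
  set E := Real.exp δ
  set F := Real.exp (-δ)
  have hEF : E * F = 1 := by rw [hFeq]; field_simp
  have hEne : E ≠ 0 := ne_of_gt hE
  have hcne : Real.cosh δ ≠ 0 := ne_of_gt hcp
  set s : ℝ := 1 / Real.cosh δ with hs
  have hspos : 0 < s := by positivity
  -- value at s
  have hv1 : f (s * E) = 1 / (Real.cosh δ) ^ 2 := by
    rw [hf, hs, hA, hFeq]; field_simp; ring
  have hv2 : f (s * F) = 1 / (Real.cosh δ) ^ 2 := by
    rw [hf, hs, hA, hFeq]; field_simp; ring
  -- upper bound and strictness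
  have key : ∀ c : ℝ, 0 < c → c ≠ s →
      min (f (c * E)) (f (c * F)) < 1 / (Real.cosh δ) ^ 2 := by
    intro c hc hne
    have hAne : (E + F) ≠ 0 := by positivity
    have hseq : s = 2 / (E + F) := by rw [hs, hA]; field_simp
    have hgoal : 1 / (Real.cosh δ) ^ 2 = 4 / (E + F) ^ 2 := by
      rw [hA]; field_simp; ring
    rw [hgoal]
    rcases lt_or_gt_of_ne hne with h | h
    · -- c < s : f(c*F) < s^2
      have hcA : c * (E + F) < 2 := by
        rw [hseq] at h
        have := (lt_div_iff₀ (by positivity)).mp h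
        linarith
      have hfac : c * (E + F) - 2 * E ^ 2 < 0 := by nlinarith
      have hid : 4 - (2 * (c * F) - (c * F) ^ 2) * (E + F) ^ 2
          = F ^ 2 * ((c * (E + F) - 2) * (c * (E + F) - 2 * E ^ 2)) := by
        have hFE : F = E⁻¹ := hFeq
        rw [hFE]; field_simp; ring
      have hpos : 0 < 4 - (2 * (c * F) - (c * F) ^ 2) * (E + F) ^ 2 := by
        rw [hid]
        have := mul_pos_of_neg_of_neg (by linarith : c * (E + F) - 2 < 0) hfac
        positivity
      have : f (c * F) < 4 / (E + F) ^ 2 := by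
        rw [hf, lt_div_iff₀ (by positivity)]
        nlinarith
      exact lt_of_le_of_lt (min_le_right _ _) this
    · -- c > s : f(c*E) < s^2
      have hcA : 2 < c * (E + F) := by
        rw [hseq] at h
        have := (div_lt_iff₀ (by positivity)).mp h
        linarith
      have hfac : 0 < c * (E + F) - 2 * F ^ 2 := by nlinarith
      have hid : 4 - (2 * (c * E) - (c * E) ^ 2) * (E + F) ^ 2
          = E ^ 2 * ((c * (E + F) - 2) * (c * (E + F) - 2 * F ^ 2)) := by
        have hFE : F = E⁻¹ := hFeq
        rw [hFE]; field_simp; ring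
      have hpos : 0 < 4 - (2 * (c * E) - (c * E) ^ 2) * (E + F) ^ 2 := by
        rw [hid]
        have := mul_pos (by linarith : 0 < c * (E + F) - 2) hfac
        positivity
      have : f (c * E) < 4 / (E + F) ^ 2 := by
        rw [hf, lt_div_iff₀ (by positivity)]
        nlinarith
      exact lt_of_le_of_lt (min_le_left _ _) this
  refine ⟨⟨⟨s, hspos, by rw [hv1, hv2, min_self]⟩, ?_⟩, ?_⟩
  · rintro v ⟨c, hc, rfl⟩
    by_cases hne : c = s
    · rw [hne, hv1, hv2, min_self]
    · exact le_of_lt (key c hc hne)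
  · intro c hc hmin
    by_contra hne
    exact absurd hmin (ne_of_lt (key c hc hne))
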